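/- The Tamari order on binary trees, defined as the transitive closure of right rotation (replacing a subtree y(x(A,B),C) by x(A,y(B,C))), is a lattice quotient of the right weak order on permutations via the binary search tree map: if σ ≤ μ in right weak order then ABR(σ) ≤ ABR(μ) in the Tamari order. -/

import Mathlib

/-- Unlabelled binary trees. -/
inductive Tree0 where
  | leaf : Tree0
  | node : Tree0 → Tree0 → Tree0
deriving DecidableEq

namespace Tree0

/-- One right rotation somewhere in the tree: `y(x(A,B),C) ↦ x(A,y(B,C))`. -/
inductive Rot : Tree0 → Tree0 → Prop
  | root (A B C : Tree0) : Rot (node (node A B) C) (node A (node B C))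
  | left {l l' : Tree0} (r : Tree0) : Rot l l' → Rot (node l r) (node l' r)
  | right (l : Tree0) {r r' : Tree0} : Rot r r' → Rot (node l r) (node l r')

/-- The Tamari order: transitive closure of right rotation. -/
def tamariLE : Tree0 → Tree0 → Prop := Relation.ReflTransGen Rot

end Tree0

/-- Labelled binary trees (labels in `ℕ`). -/
inductive BT where
  | leaf : BT
  | node : BT → ℕ → BT → BT
deriving DecidableEq

namespace BT

/-- Binary search tree insertion: `k` goes left if `≤` the root, right if `>`. -/
def bstInsert (k : ℕ) : BT → BT
  | leaf => node leaf k leaf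
  | node l x r => if k ≤ x then node (bstInsert k l) x r else node l x (bstInsert k r)

/-- Insert the letters of a word from right to left into an empty BST. -/
def abr (w : List ℕ) : BT := w.foldr bstInsert leaf

/-- Underlying unlabelled shape. -/
def shape : BT → Tree0
  | leaf => Tree0.leaf
  | node l _ r => Tree0.node (shape l) (shape r)

end BT

/-- The word of values of a permutation of `{1,…,n}`. -/
def wordOf {n : ℕ} (σ : Equiv.Perm (Fin n)) : List ℕ :=
  List.ofFn fun i => (σ i : ℕ) + 1

/-- The binary search tree shape of a permutation. -/
def abrShape {n : ℕ} (σ : Equiv.Perm (Fin n)) : Tree0 :=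
  BT.shape (BT.abr (wordOf σ))

/-- The right weak order: generated by `σ ⋖ σsᵢ` when `σ(i) < σ(i+1)`. -/
def rightWeakLE (n : ℕ) (σ μ : Equiv.Perm (Fin n)) : Prop :=
  Relation.ReflTransGen
    (fun a b => ∃ (i : ℕ) (h : i + 1 < n),
      a (⟨i, Nat.lt_of_succ_lt h⟩ : Fin n) < a ⟨i + 1, h⟩ ∧
      b = a * Equiv.swap (⟨i, Nat.lt_of_succ_lt h⟩ : Fin n) ⟨i + 1, h⟩) σ μ


namespace BT

/-- Labelled right rotation (with `x ≤ y`). -/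
inductive LRot : BT → BT → Prop
  | root {x y : ℕ} (hxy : x ≤ y) (A B C : BT) :
      LRot (node (node A x B) y C) (node A x (node B y C))
  | left {l l' : BT} (x : ℕ) (r : BT) : LRot l l' → LRot (node l x r) (node l' x r)
  | right (l : BT) (x : ℕ) {r r' : BT} : LRot r r' → LRot (node l x r) (node l x r')

lemma shape_rot {t1 t2 : BT} (h : LRot t1 t2) : Tree0.Rot t1.shape t2.shape := by
  induction h with
  | root hxy A B C => exact Tree0.Rot.root _ _ _
  | left x r _ ih => exact Tree0.Rot.left _ ih
  | right l x _ ih => exact Tree0.Rot.right _ ih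

lemma insert_lrot (k : ℕ) {t1 t2 : BT} (h : LRot t1 t2) :
    LRot (bstInsert k t1) (bstInsert k t2) := by
  induction h with
  | @root x y hxy A B C =>
    by_cases h2 : k ≤ y
    · by_cases h1 : k ≤ x
      · simp only [bstInsert, if_pos h1, if_pos h2]
        exact LRot.root hxy _ _ _
      · simp only [bstInsert, if_pos h2, if_neg h1]
        exact LRot.root hxy _ _ _
    · have h1 : ¬ k ≤ x := fun hk => h2 (hk.trans hxy)
      simp only [bstInsert, if_neg h1, if_neg h2]
      exact LRot.root hxy _ _ _
  | left x r _ ih =>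
    by_cases h1 : k ≤ x
    · simp only [bstInsert, if_pos h1]; exact LRot.left _ _ ih
    · simp only [bstInsert, if_neg h1]; exact LRot.left _ _ ‹_›
  | right l x _ ih =>
    by_cases h1 : k ≤ x
    · simp only [bstInsert, if_pos h1]; exact LRot.right _ _ ‹_›
    · simp only [bstInsert, if_neg h1]; exact LRot.right _ _ ih

lemma swap_insert {a b : ℕ} (hab : a < b) (t : BT) :
    Relation.ReflTransGen LRot (bstInsert a (bstInsert b t)) (bstInsert b (bstInsert a t)) := by
  induction t with
  | leaf =>
    have h1 : a ≤ b := hab.le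
    have h2 : ¬ b ≤ a := not_le.mpr hab
    simp only [bstInsert, if_pos h1, if_neg h2]
    exact Relation.ReflTransGen.single (LRot.root h1 _ _ _)
  | node l x r ihl ihr =>
    by_cases hb : b ≤ x
    · have ha : a ≤ x := (hab.le).trans hb
      simp only [bstInsert, if_pos hb, if_pos ha]
      exact Relation.ReflTransGen.lift (fun t => node t x r)
        (fun _ _ h => LRot.left _ _ h) _ _ ihl
    · by_cases ha : a ≤ x
      · simp only [bstInsert, if_pos ha, if_neg hb]
        exact Relation.ReflTransGen.refl
      · simp only [bstInsert, if_neg ha, if_neg hb]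
        exact Relation.ReflTransGen.lift (fun t => node l x t)
          (fun _ _ h => LRot.right _ _ h) _ _ ihr

lemma swap_abr {a b : ℕ} (hab : a < b) (u v : List ℕ) :
    Relation.ReflTransGen LRot (abr (u ++ a :: b :: v)) (abr (u ++ b :: a :: v)) := by
  induction u with
  | nil => exact swap_insert hab (abr v)
  | cons k u ih =>
    simpa [abr] using Relation.ReflTransGen.lift (bstInsert k)
      (fun _ _ h => insert_lrot k h) _ _ ih

end BT

lemma list_split2 {α : Type*} (l : List α) (i : ℕ) (h : i + 1 < l.length) :
    l = l.take i ++ l[i] :: l[i+1] :: l.drop (i+2) := by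
  conv_lhs => rw [← List.take_append_drop i l]
  congr 1
  rw [List.drop_eq_getElem_cons (by omega : i < l.length)]
  congr 1
  exact List.drop_eq_getElem_cons h

lemma tamari_step (n : ℕ) (σ μ : Equiv.Perm (Fin n))
    (hstep : ∃ (i : ℕ) (h : i + 1 < n),
      σ (⟨i, Nat.lt_of_succ_lt h⟩ : Fin n) < σ ⟨i + 1, h⟩ ∧
      μ = σ * Equiv.swap (⟨i, Nat.lt_of_succ_lt h⟩ : Fin n) ⟨i + 1, h⟩) :
    Tree0.tamariLE (abrShape σ) (abrShape μ) := by
  obtain ⟨i, hi, hlt, hμ⟩ := hstep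
  subst hμ
  set μ := σ * Equiv.swap (⟨i, Nat.lt_of_succ_lt hi⟩ : Fin n) ⟨i + 1, hi⟩ with hμ
  set a := (σ ⟨i, Nat.lt_of_succ_lt hi⟩ : ℕ) + 1 with ha
  set b := (σ ⟨i + 1, hi⟩ : ℕ) + 1 with hb
  have hab : a < b := by
    have := Fin.lt_iff_val_lt_val.mp hlt; omega
  have hlen1 : (wordOf σ).length = n := by simp [wordOf]
  have hlen2 : (wordOf μ).length = n := by simp [wordOf]
  have hi1 : i + 1 < (wordOf σ).length := by omega
  have hi2 : i + 1 < (wordOf μ).length := by omega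
  have hμi : ∀ p : i < n, (μ ⟨i, p⟩ : ℕ) = (σ ⟨i + 1, hi⟩ : ℕ) := by
    intro p
    have hp : (⟨i, p⟩ : Fin n) = ⟨i, Nat.lt_of_succ_lt hi⟩ := rfl
    rw [hμ, hp, Equiv.Perm.mul_apply, Equiv.swap_apply_left]
  have hμi1 : ∀ p : i + 1 < n, (μ ⟨i + 1, p⟩ : ℕ) = (σ ⟨i, Nat.lt_of_succ_lt hi⟩ : ℕ) := by
    intro p
    have hp : (⟨i + 1, p⟩ : Fin n) = ⟨i + 1, hi⟩ := rfl
    rw [hμ, hp, Equiv.Perm.mul_apply, Equiv.swap_apply_right]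
  have keyμ : ∀ (j : ℕ) (hj : j < n), j ≠ i → j ≠ i + 1 →
      (μ ⟨j, hj⟩ : ℕ) = (σ ⟨j, hj⟩ : ℕ) := by
    intro j hj h1 h2
    rw [hμ, Equiv.Perm.mul_apply,
      Equiv.swap_apply_of_ne_of_ne (Fin.ne_of_val_ne h1) (Fin.ne_of_val_ne h2)]
  have e1 : ∀ p : i < (wordOf σ).length, (wordOf σ)[i]'p = a := by
    intro p; simp only [wordOf, List.getElem_ofFn]
    rfl
  have e2 : ∀ p : i + 1 < (wordOf σ).length, (wordOf σ)[i+1]'p = b := by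
    intro p; simp only [wordOf, List.getElem_ofFn]
    rfl
  have f1 : ∀ p : i < (wordOf μ).length, (wordOf μ)[i]'p = b := by
    intro p; simp only [wordOf, List.getElem_ofFn]
    rw [hμi (by omega)]
  have f2 : ∀ p : i + 1 < (wordOf μ).length, (wordOf μ)[i+1]'p = a := by
    intro p; simp only [wordOf, List.getElem_ofFn]
    rw [hμi1 (by omega)]
  have htake : (wordOf μ).take i = (wordOf σ).take i := by
    apply List.ext_getElem
    · simp [wordOf]
    · intro j hj1 hj2
      have hjn : j < i ∧ j < n := by
        simpa [wordOf, Nat.lt_min] using hj1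
      rw [List.getElem_take, List.getElem_take]
      simp only [wordOf, List.getElem_ofFn]
      have := keyμ j (by omega) (by omega) (by omega)
      omega
  have hdrop : (wordOf μ).drop (i+2) = (wordOf σ).drop (i+2) := by
    apply List.ext_getElem
    · simp [wordOf]
    · intro j hj1 hj2
      have hjn : i + 2 + j < n := by
        rw [List.length_drop, hlen2] at hj1; omega
      rw [List.getElem_drop, List.getElem_drop]
      simp only [wordOf, List.getElem_ofFn]
      have := keyμ (i + 2 + j) (by omega) (by omega) (by omega)
      omega
  have hw1 : wordOf σ = (wordOf σ).take i ++ a :: b :: (wordOf σ).drop (i+2) := by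
    conv_lhs => rw [list_split2 (wordOf σ) i hi1]
    rw [e1, e2]
  have hw2 : wordOf μ = (wordOf σ).take i ++ b :: a :: (wordOf σ).drop (i+2) := by
    conv_lhs => rw [list_split2 (wordOf μ) i hi2]
    rw [f1, f2, htake, hdrop]
  have key := BT.swap_abr hab ((wordOf σ).take i) ((wordOf σ).drop (i+2))
  rw [← hw1, ← hw2] at key
  exact Relation.ReflTransGen.lift BT.shape (fun _ _ h => BT.shape_rot h) _ _ key

/-- The binary search tree map is order preserving from the right weak
order to the Tamari order: if `σ ≤ μ` in right weak order then `ABR(σ) ≤ ABR(μ)` in the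
Tamari order (the Tamari order being a lattice quotient of the weak order). -/
theorem tamari_quotient_of_weak_order (n : ℕ) (σ μ : Equiv.Perm (Fin n))
    (h : rightWeakLE n σ μ) :
    Tree0.tamariLE (abrShape σ) (abrShape μ) := by
  induction h with
  | refl => exact Relation.ReflTransGen.refl
  | tail hab hstep ih =>
    exact ih.trans (tamari_step n _ _ hstep)
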